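/- Let G be a finite bipartite graph, let (b, w) be a maxbisize of G, let C be the vertex set of a biclique of G of size (b, w), and let M ⊆ B ∪ W be a set such that M is fully adjacent to C \ M. Then the pair (|B ∩ M ∩ C|, |W ∩ M ∩ C|) belongs to D(M). -/
import Mathlib


open Finset

/-- A finite bipartite graph: black vertices `B`, white vertices `W` (disjoint finite sets),
and an edge set `E ⊆ B × W`. -/
structure BipGraph (V : Type) [DecidableEq V] where
  B : Finset V
  W : Finset V
  disj : Disjoint B W
  E : Set (V × V)
  E_sub : ∀ e ∈ E, e.1 ∈ B ∧ e.2 ∈ W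

variable {V : Type} [DecidableEq V]

/-- `(S, T)` is a biclique of `G`. -/
def IsBiclique (G : BipGraph V) (S T : Finset V) : Prop :=
  S ⊆ G.B ∧ T ⊆ G.W ∧ ∀ b ∈ S, ∀ w ∈ T, (b, w) ∈ G.E

/-- `(b, w)` is a bisize of `G`: `G` contains a biclique of size `(b, w)`. -/
def Bisize (G : BipGraph V) (p : ℕ × ℕ) : Prop :=
  ∃ S T, IsBiclique G S T ∧ S.card = p.1 ∧ T.card = p.2

/-- `Dominates p q` : `p` dominates `q`, i.e. `q.1 ≤ p.1` and `q.2 ≤ p.2`. -/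
def Dominates (p q : ℕ × ℕ) : Prop := q.1 ≤ p.1 ∧ q.2 ≤ p.2

/-- A maxbisize of `G` : a bisize not strictly dominated by another bisize. -/
def MaxBisize (G : BipGraph V) (p : ℕ × ℕ) : Prop :=
  Bisize G p ∧ ∀ q, Bisize G q → Dominates q p → q = p

/-- `DD G` is the set of maxbisizes of `G` (denoted `D(G)` in the paper). -/
def DD (G : BipGraph V) : Set (ℕ × ℕ) := {p | MaxBisize G p}

/-- `Dom X` : the elements of `X` not strictly dominated by another element of `X`. -/
def Dom (X : Set (ℕ × ℕ)) : Set (ℕ × ℕ) := {p ∈ X | ∀ q ∈ X, Dominates q p → q = p}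

/-- The induced subgraph `G[M]`. -/
def induce (G : BipGraph V) (M : Finset V) : BipGraph V where
  B := G.B ∩ M
  W := G.W ∩ M
  disj := G.disj.mono inter_subset_left inter_subset_left
  E := {e ∈ G.E | e.1 ∈ M ∧ e.2 ∈ M}
  E_sub := fun e he =>
    ⟨mem_inter.mpr ⟨(G.E_sub e he.1).1, he.2.1⟩, mem_inter.mpr ⟨(G.E_sub e he.1).2, he.2.2⟩⟩

/-- `X` is nonadjacent to `Y` : no vertex of `X` is adjacent to a vertex of `Y`. -/
def Nonadj (G : BipGraph V) (X Y : Finset V) : Prop :=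
  ∀ x ∈ X, ∀ y ∈ Y, (x, y) ∉ G.E ∧ (y, x) ∉ G.E

/-- `X` is fully adjacent to `Y` : every black vertex of `X` is adjacent to every white
vertex of `Y` and every white vertex of `X` is adjacent to every black vertex of `Y`. -/
def FullyAdj (G : BipGraph V) (X Y : Finset V) : Prop :=
  (∀ b ∈ X ∩ G.B, ∀ w ∈ Y ∩ G.W, (b, w) ∈ G.E) ∧
  (∀ b ∈ Y ∩ G.B, ∀ w ∈ X ∩ G.W, (b, w) ∈ G.E)

/-- `X` is left adjacent to `Y` : every black vertex of `X` is adjacent to every white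
vertex of `Y` and no white vertex of `X` is adjacent to a black vertex of `Y`. -/
def LeftAdj (G : BipGraph V) (X Y : Finset V) : Prop :=
  (∀ b ∈ X ∩ G.B, ∀ w ∈ Y ∩ G.W, (b, w) ∈ G.E) ∧
  (∀ b ∈ Y ∩ G.B, ∀ w ∈ X ∩ G.W, (b, w) ∉ G.E)

open Classical in
/-- `X ⊕ Y` with the convention `∅ ⊕ X = X ⊕ ∅ = X`. -/
noncomputable def oplus (X Y : Set (ℕ × ℕ)) : Set (ℕ × ℕ) :=
  if X = ∅ then Y else if Y = ∅ then X
  else {p | ∃ x ∈ X, ∃ y ∈ Y, p = x + y}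

/-- `→_w^z X`. -/
def shiftW (z : ℕ) (X : Set (ℕ × ℕ)) : Set (ℕ × ℕ) := {p | ∃ q ∈ X, p = (q.1, q.2 + z)}

/-- `→_b^z X`. -/
def shiftB (z : ℕ) (X : Set (ℕ × ℕ)) : Set (ℕ × ℕ) := {p | ∃ q ∈ X, p = (q.1 + z, q.2)}

/-- A bimodule of `G`. -/
def Bimodule (G : BipGraph V) (M : Finset V) : Prop :=
  M ⊆ G.B ∪ G.W ∧ ∀ v ∈ (G.B ∪ G.W) \ M, Nonadj G {v} M ∨ FullyAdj G {v} M

/-- The quotient graph of `G` by a family `M` of bimodules: vertex `(i, true)` is the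
black vertex `bᵢ` (present when `Mᵢ ∩ B ≠ ∅`), `(i, false)` the white vertex `wᵢ`. -/
def quotientGraph (G : BipGraph V) {k : ℕ} (M : Fin k → Finset V) :
    BipGraph (Fin k × Bool) where
  B := Finset.univ.filter fun p => p.2 = true ∧ (M p.1 ∩ G.B).Nonempty
  W := Finset.univ.filter fun p => p.2 = false ∧ (M p.1 ∩ G.W).Nonempty
  disj := by
    rw [Finset.disjoint_left]
    intro p hp hq
    simp only [Finset.mem_filter, Finset.mem_univ, true_and] at hp hq
    rw [hp.1] at hq
    exact Bool.noConfusion hq.1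
  E := {e | e.1.2 = true ∧ e.2.2 = false ∧
       ∃ x ∈ M e.1.1 ∩ G.B, ∃ y ∈ M e.2.1 ∩ G.W, (x, y) ∈ G.E}
  E_sub := fun e he => by
    obtain ⟨h1, h2, x, hx, y, hy, _⟩ := he
    constructor <;> simp only [Finset.mem_filter, Finset.mem_univ, true_and]
    · exact ⟨h1, ⟨x, hx⟩⟩
    · exact ⟨h2, ⟨y, hy⟩⟩

/-- `Rroc S` for a set `S` of vertices of the quotient graph. -/
def Rroc (G : BipGraph V) {k : ℕ} (M : Fin k → Finset V)
    (S : Finset (Fin k × Bool)) : Finset V :=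
  S.biUnion fun p => if p.2 then M p.1 ∩ G.B else M p.1 ∩ G.W

/-- `Corr S` for a set `S` of vertices of `G`. -/
def Corr (G : BipGraph V) {k : ℕ} (M : Fin k → Finset V) (C : Finset V) :
    Finset (Fin k × Bool) :=
  Finset.univ.filter fun p =>
    if p.2 then (C ∩ M p.1 ∩ G.B).Nonempty else (C ∩ M p.1 ∩ G.W).Nonempty

/-- `C` is the vertex set of a biclique of `G`. -/
def IsBicliqueVS (G : BipGraph V) (C : Finset V) : Prop :=
  ∃ S T, IsBiclique G S T ∧ S ∪ T = C

/-- `C` is the vertex set of a maximal biclique of `G`. -/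
def MaximalBicliqueVS (G : BipGraph V) (C : Finset V) : Prop :=
  IsBicliqueVS G C ∧ ∀ D, IsBicliqueVS G D → C ⊆ D → C = D

/-- `D_C(Mᵢ)`, the maxbisize set of the bimodule `Mᵢ` with respect to a maximal
biclique `C` of the quotient graph. -/
def DC (G : BipGraph V) {k : ℕ} (M : Fin k → Finset V)
    (C : Finset (Fin k × Bool)) (i : Fin k) : Set (ℕ × ℕ) :=
  if (i, true) ∈ C then
    if (i, false) ∈ C then DD (induce G (M i))
    else {((M i ∩ G.B).card, 0)}
  else
    if (i, false) ∈ C then {(0, (M i ∩ G.W).card)}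
    else ∅

/-- `f 0 ⊕ f 1 ⊕ … ⊕ f (k-1)` (with the convention that `∅` is neutral for `⊕`). -/
noncomputable def oplusFold {k : ℕ} (f : Fin k → Set (ℕ × ℕ)) : Set (ℕ × ℕ) :=
  (List.finRange k).foldr (fun i acc => oplus (f i) acc) ∅

/-- The path on `n` vertices `0, 1, …, n-1`, two-colored alternately; the black
vertices are those whose index has parity `r`. -/
def pathGraph (n r : ℕ) : BipGraph (Fin n) where
  B := Finset.univ.filter fun i => (i : ℕ) % 2 = r
  W := Finset.univ.filter fun i => (i : ℕ) % 2 ≠ r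
  disj := by
    rw [Finset.disjoint_left]
    intro i hi hj
    simp only [Finset.mem_filter, Finset.mem_univ, true_and] at hi hj
    exact hj hi
  E := {e | (e.1 : ℕ) % 2 = r ∧ ((e.1 : ℕ) + 1 = (e.2 : ℕ) ∨ (e.2 : ℕ) + 1 = (e.1 : ℕ))}
  E_sub := fun e he => by
    obtain ⟨h1, h2⟩ := he
    refine ⟨?_, ?_⟩ <;> simp only [Finset.mem_filter, Finset.mem_univ, true_and]
    · exact h1
    · omega

/-- The cycle on `n` vertices `0, 1, …, n-1` (consecutive vertices modulo `n` adjacent),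
two-colored alternately; the black vertices are those whose index has parity `r`. -/
def cycleGraph (n r : ℕ) : BipGraph (Fin n) where
  B := Finset.univ.filter fun i => (i : ℕ) % 2 = r
  W := Finset.univ.filter fun i => (i : ℕ) % 2 ≠ r
  disj := by
    rw [Finset.disjoint_left]
    intro i hi hj
    simp only [Finset.mem_filter, Finset.mem_univ, true_and] at hi hj
    exact hj hi
  E := {e | (e.1 : ℕ) % 2 = r ∧ (e.2 : ℕ) % 2 ≠ r ∧
       (((e.1 : ℕ) + 1) % n = (e.2 : ℕ) ∨ ((e.2 : ℕ) + 1) % n = (e.1 : ℕ))}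
  E_sub := fun e he => by
    obtain ⟨h1, h2, _⟩ := he
    refine ⟨?_, ?_⟩ <;> simp only [Finset.mem_filter, Finset.mem_univ, true_and]
    · exact h1
    · exact h2

/-- The bipartite complement of `G`. -/
def bipCompl (G : BipGraph V) : BipGraph V where
  B := G.B
  W := G.W
  disj := G.disj
  E := {e | e.1 ∈ G.B ∧ e.2 ∈ G.W ∧ e ∉ G.E}
  E_sub := fun _ he => ⟨he.1, he.2.1⟩

/-- `x` and `y` are adjacent in `G`. -/
def Adjv (G : BipGraph V) (x y : V) : Prop := (x, y) ∈ G.E ∨ (y, x) ∈ G.E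

/-- `G` is twin-free: no two distinct vertices have the same set of neighbors. -/
def TwinFree (G : BipGraph V) : Prop :=
  ∀ x ∈ G.B ∪ G.W, ∀ y ∈ G.B ∪ G.W,
    ({z | Adjv G x z} = {z | Adjv G y z}) → x = y

/-- The edges of the skew star `Star_{1,2,3}`: a path `0-1-2-3-4-5` plus a vertex `6`
adjacent only to `2`. -/
def starEdges : List (ℕ × ℕ) := [(0, 1), (1, 2), (2, 3), (3, 4), (4, 5), (2, 6)]

/-- `G` contains no induced `Star_{1,2,3}`. -/
def Star123Free (G : BipGraph V) : Prop :=
  ¬ ∃ v : Fin 7 → V, Function.Injective v ∧ (∀ i, v i ∈ G.B ∪ G.W) ∧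
    ∀ i j : Fin 7, Adjv G (v i) (v j) ↔
      (((i : ℕ), (j : ℕ)) ∈ starEdges ∨ ((j : ℕ), (i : ℕ)) ∈ starEdges)

/-- Every vertex of `G` has degree at most 2 (equivalent to `K_{1,3}`-freeness for
bipartite graphs). -/
def MaxDeg2 (G : BipGraph V) : Prop :=
  ∀ x ∈ G.B ∪ G.W, ({y | Adjv G x y}).ncard ≤ 2
/-- Proposition 4 of the paper. -/
theorem maxbisize_of_fully_adjacent_bimodule {V : Type} [DecidableEq V] (G : BipGraph V)
    (b w : ℕ) (S T C M : Finset V)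
    (hmax : MaxBisize G (b, w))
    (hbc : IsBiclique G S T) (hSb : S.card = b) (hTw : T.card = w)
    (hC : C = S ∪ T)
    (hM : M ⊆ G.B ∪ G.W)
    (hadj : FullyAdj G M (C \ M)) :
    ((G.B ∩ M ∩ C).card, (G.W ∩ M ∩ C).card) ∈ DD (induce G M) := by
  obtain ⟨hSB, hTW, hE⟩ := hbc
  obtain ⟨hbis, hmax'⟩ := hmax
  -- key card identities
  have hBcard : G.B ∩ M ∩ C = S ∩ M := by
    ext x
    simp only [mem_inter, hC, mem_union]
    constructor
    · rintro ⟨⟨hB, hMx⟩, hSx | hTx⟩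
      · exact ⟨hSx, hMx⟩
      · exact absurd hB (Finset.disjoint_right.mp G.disj (hTW hTx))
    · rintro ⟨hSx, hMx⟩; exact ⟨⟨hSB hSx, hMx⟩, Or.inl hSx⟩
  have hWcard : G.W ∩ M ∩ C = T ∩ M := by
    ext x
    simp only [mem_inter, hC, mem_union]
    constructor
    · rintro ⟨⟨hW, hMx⟩, hSx | hTx⟩
      · exact absurd hW (Finset.disjoint_left.mp G.disj (hSB hSx))
      · exact ⟨hTx, hMx⟩
    · rintro ⟨hTx, hMx⟩; exact ⟨⟨hTW hTx, hMx⟩, Or.inr hTx⟩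
  constructor
  · -- Bisize
    refine ⟨S ∩ M, T ∩ M, ⟨?_, ?_, ?_⟩, by rw [hBcard], by rw [hWcard]⟩
    · intro x hx
      simp only [mem_inter] at hx
      exact mem_inter.mpr ⟨hSB hx.1, hx.2⟩
    · intro x hx
      simp only [mem_inter] at hx
      exact mem_inter.mpr ⟨hTW hx.1, hx.2⟩
    · intro x hx y hy
      simp only [mem_inter] at hx hy
      exact ⟨hE x hx.1 y hy.1, hx.2, hy.2⟩
  · -- maximality
    rintro ⟨q1, q2⟩ ⟨S', T', ⟨hS'B, hT'W, hE'⟩, hS'c, hT'c⟩ ⟨hd1, hd2⟩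
    simp only at hd1 hd2 hS'c hT'c
    have hS'M : S' ⊆ M := fun x hx => (mem_inter.mp (hS'B hx)).2
    have hT'M : T' ⊆ M := fun x hx => (mem_inter.mp (hT'W hx)).2
    have hS'GB : S' ⊆ G.B := fun x hx => (mem_inter.mp (hS'B hx)).1
    have hT'GW : T' ⊆ G.W := fun x hx => (mem_inter.mp (hT'W hx)).1
    -- big biclique in G
    have hbig : IsBiclique G (S' ∪ (S \ M)) (T' ∪ (T \ M)) := by
      refine ⟨?_, ?_, ?_⟩
      · intro x hx
        rcases mem_union.mp hx with h | h
        · exact hS'GB h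
        · exact hSB (mem_sdiff.mp h).1
      · intro x hx
        rcases mem_union.mp hx with h | h
        · exact hT'GW h
        · exact hTW (mem_sdiff.mp h).1
      · intro x hx y hy
        rcases mem_union.mp hx with hx' | hx' <;> rcases mem_union.mp hy with hy' | hy'
        · exact (hE' x hx' y hy').1
        · -- x ∈ S' ⊆ M ∩ B, y ∈ T \ M ⊆ (C \ M) ∩ W
          apply hadj.1 x (mem_inter.mpr ⟨hS'M hx', hS'GB hx'⟩)
          refine mem_inter.mpr ⟨mem_sdiff.mpr ⟨?_, (mem_sdiff.mp hy').2⟩, hTW (mem_sdiff.mp hy').1⟩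
          rw [hC]; exact mem_union_right _ (mem_sdiff.mp hy').1
        · -- x ∈ S \ M black in C\M, y ∈ T' ⊆ M ∩ W
          apply hadj.2 x
          · refine mem_inter.mpr ⟨mem_sdiff.mpr ⟨?_, (mem_sdiff.mp hx').2⟩, hSB (mem_sdiff.mp hx').1⟩
            rw [hC]; exact mem_union_left _ (mem_sdiff.mp hx').1
          · exact mem_inter.mpr ⟨hT'M hy', hT'GW hy'⟩
        · exact hE x (mem_sdiff.mp hx').1 y (mem_sdiff.mp hy').1
    have hdS : Disjoint S' (S \ M) :=
      Finset.disjoint_left.mpr fun x hx hx' => (mem_sdiff.mp hx').2 (hS'M hx)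
    have hdT : Disjoint T' (T \ M) :=
      Finset.disjoint_left.mpr fun x hx hx' => (mem_sdiff.mp hx').2 (hT'M hx)
    have hcardS : (S' ∪ (S \ M)).card = q1 + (S \ M).card := by
      rw [card_union_of_disjoint hdS, hS'c]
    have hcardT : (T' ∪ (T \ M)).card = q2 + (T \ M).card := by
      rw [card_union_of_disjoint hdT, hT'c]
    have hSsplit : (S ∩ M).card + (S \ M).card = S.card := by
      rw [Finset.card_inter_add_card_sdiff]
    have hTsplit : (T ∩ M).card + (T \ M).card = T.card := by
      rw [Finset.card_inter_add_card_sdiff]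
    have hbig' : Bisize G (q1 + (S \ M).card, q2 + (T \ M).card) :=
      ⟨_, _, hbig, hcardS, hcardT⟩
    have hdom : Dominates (q1 + (S \ M).card, q2 + (T \ M).card) (b, w) := by
      constructor
      · simp only
        rw [hBcard] at hd1
        omega
      · simp only
        rw [hWcard] at hd2
        omega
    have := hmax' _ hbig' hdom
    rw [Prod.mk.injEq] at this
    rw [hBcard, hWcard]
    rw [Prod.mk.injEq]
    omega
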